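/- arXiv:1006.5298 — 2 statements merged into one kernel-verified Lean document; each statement's English description precedes it below -/
import Mathlib

section
/- Let n ≥ 1, 1 < p < ∞, θ ∈ A_p, and let g be a holomorphic function on B. Then there exists a constant C > 0 such that for every f ∈ H^p(θ) the product gf belongs to H^p(θ) with ‖gf‖_{H^p(θ)} ≤ C ‖f‖_{H^p(θ)}, if and only if g is bounded on B. -/
open MeasureTheory Metric Set
open scoped ENNReal ComplexConjugate
open scoped Pointwise

noncomputable section

/-- `ℂⁿ` as a Hermitian Euclidean space. -/
abbrev Cn (n : ℕ) := EuclideanSpace ℂ (Fin n)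

instance (n : ℕ) : InnerProductSpace ℝ (Cn n) := InnerProductSpace.complexToReal
instance (n : ℕ) : MeasurableSpace (Cn n) := borel _
instance (n : ℕ) : BorelSpace (Cn n) := ⟨rfl⟩
/-- Lebesgue measure `ν` on `ℂⁿ`. -/
instance (n : ℕ) : MeasureSpace (Cn n) := measureSpaceOfInnerProductSpace

/-- The open unit ball `B` of `ℂⁿ`. -/
def uball (n : ℕ) : Set (Cn n) := Metric.ball 0 1

/-- The unit sphere `∂B` of `ℂⁿ`, as a type. -/
abbrev Sph (n : ℕ) := Metric.sphere (0 : Cn n) 1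

/-- The surface measure `σ` on the unit sphere. -/
def sphMeasure (n : ℕ) : Measure (Sph n) := (volume : Measure (Cn n)).toSphere

/-- The pairing `⟨z,w⟩ = Σ_j z_j conj (w_j)`. -/
def herm {n : ℕ} (z w : Cn n) : ℂ := ∑ j, z j * (starRingEnd ℂ) (w j)

/-- The nonisotropic ball `I_{ζ,r} = {η ∈ ∂B : |1 − ⟨η,ζ⟩| < r}`. -/
def Icap {n : ℕ} (ζ : Cn n) (r : ℝ) : Set (Sph n) :=
  {η : Sph n | ‖(1 : ℂ) - herm (η : Cn n) ζ‖ < r}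

open Classical in
/-- `I_z = I_{z/|z|, 1−|z|²}` for `0 ≠ z ∈ B`, and `I_0 = ∂B`. -/
def Iz {n : ℕ} (z : Cn n) : Set (Sph n) :=
  if z = 0 then Set.univ else Icap (‖z‖⁻¹ • z) (1 - ‖z‖ ^ 2)

/-- `θ(E) = ∫_E θ dσ` (as an extended real). -/
def wMeas {n : ℕ} (θ : Sph n → ℝ) (E : Set (Sph n)) : ℝ≥0∞ :=
  ∫⁻ ζ in E, ENNReal.ofReal (θ ζ) ∂(sphMeasure n)

/-- The average `Θ(z) = θ(I_z)/σ(I_z)`. -/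
def avgW {n : ℕ} (θ : Sph n → ℝ) (z : Cn n) : ℝ≥0∞ :=
  wMeas θ (Iz z) / sphMeasure n (Iz z)

/-- The dual weight `θ' = θ^{−p'/p}` where `p' = p/(p−1)`. -/
def dualW {n : ℕ} (p : ℝ) (θ : Sph n → ℝ) : Sph n → ℝ :=
  fun ζ => θ ζ ^ (-((p / (p - 1)) / p))

/-- The Muckenhoupt class `A_p` on the sphere: `θ` is positive a.e., integrable, with
integrable dual weight `θ' = θ^{-p'/p}`, and `sup_{z∈B} Θ(z)^{1/p} Θ'(z)^{1/p'} < ∞`. -/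
def MemAp {n : ℕ} (p : ℝ) (θ : Sph n → ℝ) : Prop :=
  Measurable θ ∧ (∀ᵐ ζ ∂(sphMeasure n), 0 < θ ζ) ∧
    Integrable θ (sphMeasure n) ∧ Integrable (dualW p θ) (sphMeasure n) ∧
    ∃ C : ℝ≥0∞, C ≠ ⊤ ∧ ∀ z ∈ uball n,
      avgW θ z ^ (1 / p) * avgW (dualW p θ) z ^ (1 - 1 / p) ≤ C

/-- `∫_{∂B} |f(rζ)|^p θ(ζ) dσ(ζ)`. -/
def hardyFn {n : ℕ} (p : ℝ) (θ : Sph n → ℝ) (f : Cn n → ℂ) (r : ℝ) : ℝ≥0∞ :=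
  ∫⁻ ζ : Sph n, ENNReal.ofReal (‖f (r • (ζ : Cn n))‖ ^ p) * ENNReal.ofReal (θ ζ)
    ∂(sphMeasure n)

/-- The weighted Hardy norm `‖f‖_{H^p(θ)}` (as an extended real). -/
def hardyNorm {n : ℕ} (p : ℝ) (θ : Sph n → ℝ) (f : Cn n → ℂ) : ℝ≥0∞ :=
  (⨆ r ∈ Set.Ioo (0 : ℝ) 1, hardyFn p θ f r) ^ (1 / p)

/-- Membership in the weighted Hardy space `H^p(θ)`: holomorphic with finite norm. -/
def MemHp {n : ℕ} (p : ℝ) (θ : Sph n → ℝ) (f : Cn n → ℂ) : Prop :=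
  DifferentiableOn ℂ f (uball n) ∧ hardyNorm p θ f < ⊤

/-- The unweighted Hardy norm `‖f‖_{H^q}` (as an extended real). -/
def hardyNormU {n : ℕ} (q : ℝ) (f : Cn n → ℂ) : ℝ≥0∞ :=
  (⨆ r ∈ Set.Ioo (0 : ℝ) 1,
    ∫⁻ ζ : Sph n, ENNReal.ofReal (‖f (r • (ζ : Cn n))‖ ^ q) ∂(sphMeasure n)) ^ (1 / q)

/-- Membership in `H^∞`: bounded and holomorphic on the ball. -/
def MemHinf {n : ℕ} (g : Cn n → ℂ) : Prop :=
  DifferentiableOn ℂ g (uball n) ∧ ∃ M : ℝ, ∀ z ∈ uball n, ‖g z‖ ≤ M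

/-- The corona condition `inf_{z∈B} |g(z)| > 0` for a tuple `g = (g_1,…,g_m)`,
where `|g(z)| = (Σ_k |g_k(z)|²)^{1/2}`. -/
def CoronaData {n m : ℕ} (g : Fin m → Cn n → ℂ) : Prop :=
  ∃ δ : ℝ, 0 < δ ∧ ∀ z ∈ uball n, δ ≤ Real.sqrt (∑ k, ‖g k z‖ ^ 2)

/-- The Morrey norm `‖f‖_{M^{p,s}}` of a function on the sphere (as an extended real). -/
def morreyNorm (n : ℕ) (p s : ℝ) (f : Sph n → ℂ) : ℝ≥0∞ :=
  ⨆ (ζ : Sph n) (ε : ℝ) (_ : 0 < ε),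
    (ENNReal.ofReal (ε ^ (s * p - n)) *
      ∫⁻ η in Icap (ζ : Cn n) ε, ENNReal.ofReal (‖f η‖ ^ p) ∂(sphMeasure n)) ^ (1 / p)

/-- The holomorphic Morrey norm `‖f‖_{HM^{p,s}} = sup_{0<r<1} ‖f_r‖_{M^{p,s}}`. -/
def hmNorm {n : ℕ} (p s : ℝ) (f : Cn n → ℂ) : ℝ≥0∞ :=
  ⨆ r ∈ Set.Ioo (0 : ℝ) 1, morreyNorm n p s (fun ζ => f (r • (ζ : Cn n)))

/-- Membership in the holomorphic Morrey space `HM^{p,s}`. -/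
def MemHM {n : ℕ} (p s : ℝ) (f : Cn n → ℂ) : Prop :=
  DifferentiableOn ℂ f (uball n) ∧ hmNorm p s f < ⊤

/-- The complex partial derivative `D_j f = ∂f/∂z_j`. -/
def Dj {n : ℕ} (f : Cn n → ℂ) (j : Fin n) (z : Cn n) : ℂ :=
  fderiv ℂ f z (EuclideanSpace.single j 1)

/-- `|∂f(z)| = Σ_j |D_j f(z)|`. -/
def delNorm {n : ℕ} (f : Cn n → ℂ) (z : Cn n) : ℝ := ∑ j, ‖Dj f j z‖

/-- The tangential derivative `D_{i,j} f(z) = conj(z_j) D_i f(z) − conj(z_i) D_j f(z)`. -/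
def Dij {n : ℕ} (f : Cn n → ℂ) (i j : Fin n) (z : Cn n) : ℂ :=
  (starRingEnd ℂ) (z j) * Dj f i z - (starRingEnd ℂ) (z i) * Dj f j z

/-- `|∂_T f(z)| = Σ_{i<j} |D_{i,j} f(z)|`. -/
def delTNorm {n : ℕ} (f : Cn n → ℂ) (z : Cn n) : ℝ :=
  ∑ i, ∑ j, if i < j then ‖Dij f i j z‖ else 0

/-- The Poisson–Szegő integral `P(φ)(z)`. -/
def poisson {n : ℕ} (φ : Sph n → ℂ) (z : Cn n) : ℂ :=
  ∫ ζ : Sph n,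
    (((1 - ‖z‖ ^ 2) ^ n / ‖(1 : ℂ) - herm z (ζ : Cn n)‖ ^ (2 * n) : ℝ) : ℂ) * φ ζ
      ∂(sphMeasure n)

/-- The admissible region `Γ_ζ = {z ∈ B : |1 − ⟨z,ζ⟩| < 1 − |z|²}`. -/
def admRegion {n : ℕ} (ζ : Sph n) : Set (Cn n) :=
  {z ∈ uball n | ‖(1 : ℂ) - herm z (ζ : Cn n)‖ < 1 - ‖z‖ ^ 2}

/-- The tent `T(A) = B \ ∪_{ζ∉A} Γ_ζ` over `A ⊆ ∂B`. -/
def tent {n : ℕ} (A : Set (Sph n)) : Set (Cn n) :=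
  uball n \ ⋃ (ζ : Sph n) (_ : ζ ∉ A), admRegion ζ

/-- `Î_z = T(I_z)`. -/
def hatI {n : ℕ} (z : Cn n) : Set (Cn n) := tent (Iz z)

/-- `φ(w,z) = |1 − ⟨z,w⟩|² − (1−|w|²)(1−|z|²)`. -/
def phiK {n : ℕ} (w z : Cn n) : ℝ :=
  ‖(1 : ℂ) - herm z w‖ ^ 2 - (1 - ‖w‖ ^ 2) * (1 - ‖z‖ ^ 2)

private lemma sphMeasure_pos_of_isOpen {n : ℕ} (hn : 1 ≤ n) {U : Set (Sph n)} (hU : IsOpen U)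
    (hne : U.Nonempty) : 0 < sphMeasure n U := by
  obtain ⟨W, hW, hWU⟩ := isOpen_induced_iff.1 hU
  obtain ⟨ζ₀, hζ₀⟩ := hne
  rw [sphMeasure, Measure.toSphere_apply' _ hU.measurableSet]
  have hdim : (0 : ℝ≥0∞) < Module.finrank ℝ (Cn n) := by
    haveI : Nonempty (Fin n) := Fin.pos_iff_nonempty.mp hn
    haveI : Nontrivial (Cn n) := nontrivial_of_ne (EuclideanSpace.single ⟨0, hn⟩ (1:ℂ)) 0 (by
      intro h
      have := congrArg norm h
      rw [EuclideanSpace.norm_single] at this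
      simp at this)
    have : 0 < Module.finrank ℝ (Cn n) := Module.finrank_pos
    exact_mod_cast this
  refine ENNReal.mul_pos hdim.ne' ?_
  -- the open cone
  set O : Set (Cn n) := ({0}ᶜ ∩ ball 0 1) ∩ (fun x : Cn n => ‖x‖⁻¹ • x) ⁻¹' W with hO
  have hOopen : IsOpen O := by
    refine ContinuousOn.isOpen_inter_preimage ?_ ((isOpen_compl_singleton).inter isOpen_ball) hW
    exact ContinuousOn.smul
      (((continuous_norm).continuousOn).inv₀ fun x hx => norm_ne_zero_iff.2 hx.1)
      continuousOn_id
  have hOne : O.Nonempty := by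
    refine ⟨(1/2 : ℝ) • (ζ₀ : Cn n), ⟨⟨?_, ?_⟩, ?_⟩⟩
    · simp only [mem_compl_iff, mem_singleton_iff]
      intro h
      have := congrArg norm h
      rw [norm_smul] at this
      simp [mem_sphere_zero_iff_norm.1 ζ₀.2] at this
    · rw [mem_ball_zero_iff, norm_smul, mem_sphere_zero_iff_norm.1 ζ₀.2]
      norm_num
    · have hnorm : ‖(1/2 : ℝ) • (ζ₀ : Cn n)‖ = 1/2 := by
        rw [norm_smul, mem_sphere_zero_iff_norm.1 ζ₀.2]; norm_num
      simp only [mem_preimage, hnorm]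
      rw [smul_smul]
      norm_num
      rw [← hWU] at hζ₀
      exact hζ₀
  have hsub : O ⊆ Ioo (0:ℝ) 1 • ((↑) '' U) := by
    rintro x ⟨⟨hx0, hx1⟩, hxW⟩
    have hx0' : x ≠ 0 := hx0
    have hxn : 0 < ‖x‖ := norm_pos_iff.2 hx0'
    refine Set.mem_smul.2 ⟨‖x‖, ⟨hxn, mem_ball_zero_iff.1 hx1⟩, ‖x‖⁻¹ • x, ?_, ?_⟩
    · have hmem : ‖x‖⁻¹ • x ∈ Metric.sphere (0 : Cn n) 1 := by
        rw [mem_sphere_zero_iff_norm, norm_smul, norm_inv, norm_norm]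
        field_simp
      refine ⟨⟨‖x‖⁻¹ • x, hmem⟩, ?_, rfl⟩
      rw [← hWU]
      exact hxW
    · rw [smul_smul]
      field_simp
      exact one_smul ℝ x
  exact ((hOopen.measure_pos volume hOne).trans_le (measure_mono hsub)).ne'

/-- A holomorphic `g` is a pointwise multiplier of `H^p(θ)` (with multiplier bound `C`)
iff `g` is bounded on `B` (Proposition 3.1). -/
theorem multiplier_hardy_iff_bounded (n : ℕ) (hn : 1 ≤ n)
    (p : ℝ) (hp : 1 < p) (θ : Sph n → ℝ) (hθ : MemAp p θ)
    (g : Cn n → ℂ) (hg : DifferentiableOn ℂ g (uball n)) :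
    (∃ C : ℝ, 0 < C ∧ ∀ f : Cn n → ℂ, MemHp p θ f →
        MemHp p θ (fun z => g z * f z) ∧
        hardyNorm p θ (fun z => g z * f z) ≤ ENNReal.ofReal C * hardyNorm p θ f) ↔
      ∃ M : ℝ, ∀ z ∈ uball n, ‖g z‖ ≤ M := by
  have hp0 : (0:ℝ) < p := lt_trans one_pos hp
  have hp1 : p ≠ 0 := hp0.ne'
  obtain ⟨hθm, hθpos, hθint, hθ'int, -⟩ := hθ
  set σ := sphMeasure n with hσ
  set T : ℝ≥0∞ := ∫⁻ ζ, ENNReal.ofReal (θ ζ) ∂σ with hTdef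
  have hT : T < ⊤ := hθint.lintegral_lt_top
  have hIoo : Set.Nonempty (Set.Ioo (0:ℝ) 1) := ⟨1/2, by norm_num⟩
  have hfn1 : ∀ r : ℝ, hardyFn p θ (fun _ => (1:ℂ)) r = T := by
    intro r
    simp only [hardyFn, norm_one, Real.one_rpow, ENNReal.ofReal_one, one_mul]
    rfl
  have hN1 : hardyNorm p θ (fun _ => (1:ℂ)) = T ^ (1/p) := by
    rw [hardyNorm]
    congr 1
    rw [iSup_congr fun r => iSup_congr fun _ => hfn1 r]
    exact biSup_const hIoo
  have h1mem : MemHp p θ (fun _ => (1:ℂ)) := by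
    refine ⟨differentiableOn_const 1, ?_⟩
    rw [hN1]
    exact ENNReal.rpow_lt_top_of_nonneg (by positivity) hT.ne
  -- (S^(1/p))^p = S
  have hSrec : ∀ S : ℝ≥0∞, (S ^ (1/p)) ^ p = S := by
    intro S
    rw [← ENNReal.rpow_mul, one_div_mul_cancel hp1, ENNReal.rpow_one]
  constructor
  · rintro ⟨C, hC, hmul⟩
    refine ⟨C, fun z₀ hz₀ => ?_⟩
    by_contra hgz
    push_neg at hgz
    -- powers of g
    have hpow : ∀ k : ℕ, MemHp p θ (fun z => g z ^ k) ∧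
        hardyNorm p θ (fun z => g z ^ k) ≤ ENNReal.ofReal C ^ k * T ^ (1/p) := by
      intro k
      induction k with
      | zero => simpa [hN1] using h1mem
      | succ k ih =>
        have h2 := hmul _ ih.1
        have heq : (fun z => g z * g z ^ k) = fun z => g z ^ (k+1) := by
          funext z; ring
        rw [heq] at h2
        refine ⟨h2.1, h2.2.trans ?_⟩
        calc ENNReal.ofReal C * hardyNorm p θ (fun z => g z ^ k)
            ≤ ENNReal.ofReal C * (ENNReal.ofReal C ^ k * T ^ (1/p)) :=
              mul_le_mul_right ih.2 _
          _ = ENNReal.ofReal C ^ (k+1) * T ^ (1/p) := by rw [pow_succ]; ring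
    -- the open set where g is large
    set A : ℝ := (C + ‖g z₀‖) / 2 with hA
    have hCA : C < A := by rw [hA]; linarith
    have hAg : A < ‖g z₀‖ := by rw [hA]; linarith
    have hA0 : 0 < A := lt_trans hC hCA
    set V : Set (Cn n) := uball n ∩ (fun z => ‖g z‖) ⁻¹' Set.Ioi A with hV
    have hVopen : IsOpen V :=
      ContinuousOn.isOpen_inter_preimage hg.continuousOn.norm isOpen_ball isOpen_Ioi
    have hz₀V : z₀ ∈ V := ⟨hz₀, hAg⟩
    obtain ⟨z₁, hz₁V, hz₁0⟩ : ∃ z₁ ∈ V, z₁ ≠ 0 := by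
      by_cases h0 : z₀ = 0
      · obtain ⟨ε, hε, hball⟩ := Metric.isOpen_iff.1 hVopen z₀ hz₀V
        set y : Cn n := EuclideanSpace.single ⟨0, hn⟩ (1:ℂ) with hy
        have hyn : ‖y‖ = 1 := by rw [hy, EuclideanSpace.norm_single]; simp
        refine ⟨z₀ + (ε/2) • y, hball ?_, ?_⟩
        · rw [Metric.mem_ball, dist_self_add_left, norm_smul, hyn]
          simp only [mul_one, Real.norm_eq_abs, abs_of_pos (by positivity : (0:ℝ) < ε/2)]
          linarith
        · rw [h0, zero_add]
          intro h
          have := congrArg norm h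
          rw [norm_smul, hyn] at this
          simp only [mul_one, Real.norm_eq_abs, norm_zero,
            abs_of_pos (by positivity : (0:ℝ) < ε/2)] at this
          linarith
      · exact ⟨z₀, hz₀V, h0⟩
    set r₀ : ℝ := ‖z₁‖ with hr₀def
    have hr₀pos : 0 < r₀ := norm_pos_iff.2 hz₁0
    have hr₀lt : r₀ < 1 := mem_ball_zero_iff.1 hz₁V.1
    have hζ₀mem : r₀⁻¹ • z₁ ∈ Metric.sphere (0 : Cn n) 1 := by
      rw [mem_sphere_zero_iff_norm, norm_smul, norm_inv, Real.norm_eq_abs,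
        abs_of_pos hr₀pos]
      field_simp
      rfl
    set ζ₀ : Sph n := ⟨r₀⁻¹ • z₁, hζ₀mem⟩ with hζ₀
    set U : Set (Sph n) := {ζ : Sph n | r₀ • (ζ : Cn n) ∈ V} with hU
    have hUopen : IsOpen U := by
      have hc : Continuous fun ζ : Sph n => r₀ • (ζ : Cn n) := continuous_subtype_val.const_smul r₀
      exact hVopen.preimage hc
    have hUne : U.Nonempty := by
      refine ⟨ζ₀, ?_⟩
      show r₀ • (r₀⁻¹ • z₁) ∈ V
      rw [smul_smul, mul_inv_cancel₀ hr₀pos.ne', one_smul]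
      exact hz₁V
    have hUσ : 0 < σ U := sphMeasure_pos_of_isOpen hn hUopen hUne
    set θU : ℝ≥0∞ := ∫⁻ ζ in U, ENNReal.ofReal (θ ζ) ∂σ with hθUdef
    have hθU : 0 < θU := by
      rw [pos_iff_ne_zero]
      intro h0
      have hz := (lintegral_eq_zero_iff (hθm.ennreal_ofReal)).1 h0
      rw [Filter.EventuallyEq, ae_restrict_iff' hUopen.measurableSet] at hz
      have : ∀ᵐ ζ ∂σ, ζ ∉ U := by
        filter_upwards [hz, hθpos] with ζ h1 h2 hmem
        have := h1 hmem
        simp only [Pi.zero_apply, ENNReal.ofReal_eq_zero] at this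
        linarith
      exact absurd (measure_eq_zero_iff_ae_notMem.2 this) hUσ.ne'
    have hθUT : θU ≤ T := setLIntegral_le_lintegral _ _
    have hθUtop : θU < ⊤ := lt_of_le_of_lt hθUT hT
    -- the key inequality
    have key : ∀ k : ℕ, ENNReal.ofReal ((A ^ k) ^ p) * θU ≤
        ENNReal.ofReal ((C ^ k) ^ p) * T := by
      intro k
      have hlow : ENNReal.ofReal ((A ^ k) ^ p) * θU ≤
          hardyFn p θ (fun z => g z ^ k) r₀ := by
        rw [hθUdef, ← lintegral_const_mul' _ _ ENNReal.ofReal_ne_top, hardyFn]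
        refine le_trans (setLIntegral_mono' hUopen.measurableSet fun ζ hζ => ?_)
          (setLIntegral_le_lintegral _ _)
        have hgζ : A < ‖g (r₀ • (ζ : Cn n))‖ := hζ.2
        gcongr
        rw [norm_pow]
        exact pow_le_pow_left₀ hA0.le hgζ.le k
      have hup : hardyFn p θ (fun z => g z ^ k) r₀ ≤
          ENNReal.ofReal ((C ^ k) ^ p) * T := by
        have h1 : hardyFn p θ (fun z => g z ^ k) r₀ ≤
            ⨆ r ∈ Set.Ioo (0:ℝ) 1, hardyFn p θ (fun z => g z ^ k) r := by
          have : r₀ ∈ Set.Ioo (0:ℝ) 1 := ⟨hr₀pos, hr₀lt⟩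
          exact le_biSup _ this
        have h2 : (⨆ r ∈ Set.Ioo (0:ℝ) 1, hardyFn p θ (fun z => g z ^ k) r) =
            hardyNorm p θ (fun z => g z ^ k) ^ p := by
          rw [hardyNorm, hSrec]
        rw [h2] at h1
        refine h1.trans ?_
        calc hardyNorm p θ (fun z => g z ^ k) ^ p
            ≤ (ENNReal.ofReal C ^ k * T ^ (1/p)) ^ p :=
              ENNReal.rpow_le_rpow (hpow k).2 hp0.le
          _ = ENNReal.ofReal ((C ^ k) ^ p) * T := by
              rw [ENNReal.mul_rpow_of_nonneg _ _ hp0.le, ← ENNReal.ofReal_pow hC.le,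
                ENNReal.ofReal_rpow_of_pos (pow_pos hC k), hSrec]
      exact hlow.trans hup
    -- pass to the reals and contradict
    set t : ℝ := θU.toReal with ht
    have htpos : 0 < t := ENNReal.toReal_pos hθU.ne' hθUtop.ne
    set T' : ℝ := T.toReal with hT'
    have realkey : ∀ k : ℕ, (A ^ k) ^ p * t ≤ (C ^ k) ^ p * T' := by
      intro k
      have h := key k
      have hrhs : ENNReal.ofReal ((C ^ k) ^ p) * T ≠ ⊤ :=
        ENNReal.mul_ne_top ENNReal.ofReal_ne_top hT.ne
      have := ENNReal.toReal_mono hrhs h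
      rwa [ENNReal.toReal_mul, ENNReal.toReal_mul,
        ENNReal.toReal_ofReal (by positivity), ENNReal.toReal_ofReal (by positivity)] at this
    set q : ℝ := A / C with hq
    have hq1 : 1 < q := (one_lt_div hC).2 hCA
    obtain ⟨k, hk⟩ := pow_unbounded_of_one_lt (T' / t) hq1
    have hAq : A = C * q := by rw [hq]; field_simp
    have hCkp : (0:ℝ) < (C ^ k) ^ p := Real.rpow_pos_of_pos (pow_pos hC k) p
    have h1 : (C ^ k) ^ p * ((q ^ k) ^ p * t) ≤ (C ^ k) ^ p * T' := by
      have := realkey k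
      rw [hAq, mul_pow, Real.mul_rpow (by positivity) (by positivity)] at this
      linarith [this]
    have h2 : (q ^ k) ^ p * t ≤ T' :=
      le_of_mul_le_mul_left (by linarith [h1]) hCkp
    have hqk1 : 1 ≤ q ^ k := one_le_pow₀ hq1.le
    have h3 : q ^ k ≤ (q ^ k) ^ p := by
      calc q ^ k = (q ^ k) ^ (1:ℝ) := (Real.rpow_one _).symm
        _ ≤ (q ^ k) ^ p := Real.rpow_le_rpow_of_exponent_le hqk1 hp.le
    have h4 : q ^ k ≤ T' / t := by
      rw [le_div_iff₀ htpos]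
      exact le_trans (mul_le_mul_of_nonneg_right h3 htpos.le) h2
    linarith
  · rintro ⟨M, hM⟩
    have hM0 : 0 ≤ M := le_trans (norm_nonneg _) (hM 0 (by simp [uball]))
    refine ⟨M + 1, by linarith, fun f hf => ?_⟩
    have hbd : ∀ r ∈ Set.Ioo (0:ℝ) 1, hardyFn p θ (fun z => g z * f z) r ≤
        ENNReal.ofReal ((M+1) ^ p) * hardyFn p θ f r := by
      intro r hr
      rw [hardyFn, hardyFn, ← lintegral_const_mul' _ _ ENNReal.ofReal_ne_top]
      refine lintegral_mono fun ζ => ?_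
      rw [← mul_assoc]
      have hmem : r • (ζ : Cn n) ∈ uball n := by
        rw [uball, mem_ball_zero_iff, norm_smul, Real.norm_eq_abs, abs_of_pos hr.1,
          mem_sphere_zero_iff_norm.1 ζ.2, mul_one]
        exact hr.2
      refine mul_le_mul_left ?_ _
      rw [← ENNReal.ofReal_mul (by positivity)]
      refine ENNReal.ofReal_le_ofReal ?_
      calc ‖g (r • (ζ : Cn n)) * f (r • (ζ : Cn n))‖ ^ p
          = (‖g (r • (ζ : Cn n))‖ * ‖f (r • (ζ : Cn n))‖) ^ p := by rw [norm_mul]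
        _ ≤ ((M + 1) * ‖f (r • (ζ : Cn n))‖) ^ p := by
            refine Real.rpow_le_rpow (by positivity) ?_ hp0.le
            exact mul_le_mul_of_nonneg_right (by linarith [hM _ hmem]) (norm_nonneg _)
        _ = (M + 1) ^ p * ‖f (r • (ζ : Cn n))‖ ^ p :=
            Real.mul_rpow (by linarith) (norm_nonneg _)
    have hsup : (⨆ r ∈ Set.Ioo (0:ℝ) 1, hardyFn p θ (fun z => g z * f z) r) ≤
        ENNReal.ofReal ((M+1) ^ p) * ⨆ r ∈ Set.Ioo (0:ℝ) 1, hardyFn p θ f r := by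
      refine iSup₂_le fun r hr => (hbd r hr).trans (mul_le_mul_right (le_biSup _ hr) _)
    have hnorm : hardyNorm p θ (fun z => g z * f z) ≤
        ENNReal.ofReal (M + 1) * hardyNorm p θ f := by
      rw [hardyNorm, hardyNorm]
      calc (⨆ r ∈ Set.Ioo (0:ℝ) 1, hardyFn p θ (fun z => g z * f z) r) ^ (1/p)
          ≤ (ENNReal.ofReal ((M+1) ^ p) * ⨆ r ∈ Set.Ioo (0:ℝ) 1, hardyFn p θ f r) ^ (1/p) :=
            ENNReal.rpow_le_rpow hsup (by positivity)
        _ = ENNReal.ofReal (M + 1) *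
            (⨆ r ∈ Set.Ioo (0:ℝ) 1, hardyFn p θ f r) ^ (1/p) := by
            rw [ENNReal.mul_rpow_of_nonneg _ _ (by positivity : (0:ℝ) ≤ 1/p),
              ENNReal.ofReal_rpow_of_pos (by positivity),
              ← Real.rpow_mul (by linarith), mul_one_div_cancel hp1, Real.rpow_one]
    refine ⟨⟨hg.mul hf.1, ?_⟩, hnorm⟩
    exact lt_of_le_of_lt hnorm
      (ENNReal.mul_lt_top ENNReal.ofReal_lt_top hf.2)
end
end

section
/- Let n ≥ 1, 1 < p < ∞, and 0 < s ≤ n/p. Then there exists a constant C > 0 such that for every f holomorphic on B: ‖f‖_{H^p} ≤ C ‖f‖_{HM^{p,s}} and ‖f‖_{HM^{p,s}} ≤ C ‖f‖_{H^{n/s}}, where for 0 < q < ∞ the (unweighted) Hardy norm is ‖f‖_{H^q} = (sup_{0<r<1} ∫_{∂B} |f(rζ)|^q dσ(ζ))^{1/q}. In particular H^{n/s} ⊆ HM^{p,s} ⊆ H^p. -/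
open MeasureTheory Metric Set
open scoped ENNReal ComplexConjugate

noncomputable section

open scoped Pointwise

section Aux

set_option maxHeartbeats 1000000

variable {n : ℕ}

lemma herm_eq (z w : Cn n) : herm z w = @inner ℂ _ _ w z := by
  rw [herm, PiLp.inner_apply]
  exact Finset.sum_congr rfl fun j _ => by simp [RCLike.inner_apply]

lemma sph_norm (ζ : Sph n) : ‖(ζ : Cn n)‖ = 1 := mem_sphere_zero_iff_norm.1 ζ.2

lemma icap_measurable (ζ : Cn n) (ε : ℝ) : MeasurableSet (Icap ζ ε) := by
  have hc : Continuous fun η : Sph n => ‖(1:ℂ) - herm (η : Cn n) ζ‖ := by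
    simp only [herm_eq]
    exact (continuous_const.sub (Continuous.inner continuous_const
      continuous_subtype_val)).norm
  exact measurableSet_lt hc.measurable measurable_const

lemma finrank_Cn : Module.finrank ℝ (Cn n) = 2 * n := by
  rw [← Module.finrank_mul_finrank (F := ℝ) (K := ℂ) (A := Cn n), Complex.finrank_real_complex,
    finrank_euclideanSpace_fin]

lemma sum_sq_repr (b : OrthonormalBasis (Fin (2*n)) ℝ (Cn n)) (x : Cn n) :
    ∑ j, (b.repr x j)^2 = ‖x‖^2 := by
  have h1 : @inner ℝ _ _ (b.repr x) (b.repr x) = ∑ j, (b.repr x j)^2 := by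
    rw [PiLp.inner_apply]
    exact Finset.sum_congr rfl fun j _ => by simp [RCLike.inner_apply]
  rw [← h1, real_inner_self_eq_norm_sq, b.repr.norm_map]

lemma cap_bound (hn : 1 ≤ n) (ζ : Sph n) {ε : ℝ} (hε : 0 < ε) :
    sphMeasure n (Icap (ζ : Cn n) ε) ≤ ENNReal.ofReal ((n * 8^n : ℝ) * ε^n) := by
  classical
  have h2n : 2 ≤ 2 * n := by omega
  set i0 : Fin (2*n) := ⟨0, by omega⟩ with hi0def
  set i1 : Fin (2*n) := ⟨1, by omega⟩ with hi1def
  have hi01 : i0 ≠ i1 := by simp [hi0def, hi1def, Fin.ext_iff]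
  set v : Fin (2*n) → Cn n := fun i => if i = i0 then (ζ : Cn n) else Complex.I • (ζ : Cn n)
    with hv
  have hζζ : @inner ℂ _ _ (ζ : Cn n) (ζ : Cn n) = 1 := by
    rw [inner_self_eq_norm_sq_to_K, sph_norm]; norm_num
  have key1 : (@inner ℂ _ _ (ζ:Cn n) (Complex.I • (ζ:Cn n))).re = 0 := by
    rw [inner_smul_right, hζζ]; simp
  have key2 : (@inner ℂ _ _ (Complex.I • (ζ:Cn n)) (ζ:Cn n)).re = 0 := by
    rw [inner_smul_left, hζζ]; simp
  have hortho : Orthonormal ℝ (Set.restrict {i0, i1} v) := by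
    constructor
    · rintro ⟨i, hi⟩
      simp only [Set.restrict, Set.domRestrict_apply, hv]
      by_cases h : i = i0 <;> simp [h, norm_smul, sph_norm]
    · rintro ⟨i, hi⟩ ⟨j, hj⟩ hne
      have hij : i ≠ j := fun h => hne (by simpa using h)
      simp only [Set.mem_insert_iff, Set.mem_singleton_iff] at hi hj
      simp only [Set.restrict, Set.domRestrict_apply, hv]
      rcases hi with rfl | rfl
      · rcases hj with rfl | rfl
        · exact absurd rfl hij
        · rw [if_pos rfl, if_neg (Ne.symm hi01)]
          exact key1
      · rcases hj with rfl | rfl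
        · rw [if_neg (Ne.symm hi01), if_pos rfl]
          exact key2
        · exact absurd rfl hij
  obtain ⟨b, hb⟩ := hortho.exists_orthonormalBasis_extension_of_card_eq
    (by simp [finrank_Cn])
  have hb0 : b i0 = (ζ : Cn n) := by
    rw [hb i0 (by simp)]; simp [hv]
  have hb1 : b i1 = Complex.I • (ζ : Cn n) := by
    rw [hb i1 (by simp)]; simp [hv, Ne.symm hi01]
  set a : Fin (2*n) → ℝ := fun i => if i = i0 then 1 else if i = i1 then ε else
    Real.sqrt (2*ε) with ha
  have ha0 : a i0 = 1 := by simp [ha]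
  have ha1 : a i1 = ε := by simp [ha, Ne.symm hi01]
  have hai : ∀ i, i ≠ i0 → i ≠ i1 → a i = Real.sqrt (2*ε) := by
    intro i h0 h1; simp [ha, h0, h1]
  set T : Set (EuclideanSpace ℝ (Fin (2*n))) :=
    (⇑(MeasurableEquiv.toLp 2 (Fin (2*n) → ℝ)).symm) ⁻¹'
      (Set.univ.pi fun i => Icc (-(a i)) (a i)) with hT
  have hTmem : ∀ y : EuclideanSpace ℝ (Fin (2*n)), y ∈ T ↔ ∀ i, |y i| ≤ a i := by
    intro y
    simp only [hT, Set.mem_preimage, Set.mem_univ_pi, Set.mem_Icc, ← abs_le]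
    rfl
  -- inclusion of the cone into the preimage of the box
  have hincl : Ioo (0:ℝ) 1 • ((↑) '' Icap (ζ : Cn n) ε) ⊆ ⇑b.repr ⁻¹' T := by
    rintro x hx
    rw [Set.mem_smul] at hx
    obtain ⟨t, ht, y, hy, rfl⟩ := hx
    obtain ⟨η, hη, rfl⟩ := hy
    rw [Icap, Set.mem_setOf_eq, herm_eq] at hη
    set X : Cn n := t • (η : Cn n) with hX
    set w : ℂ := @inner ℂ _ _ (ζ : Cn n) (η : Cn n) with hw
    have hw1 : ‖w‖ ≤ 1 := by
      calc ‖w‖ ≤ ‖(ζ:Cn n)‖ * ‖(η:Cn n)‖ := norm_inner_le_norm _ _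
        _ = 1 := by rw [sph_norm, sph_norm]; ring
    have hwε : ‖1 - w‖ < ε := hη
    have ht0 : 0 < t := ht.1
    have ht1 : t < 1 := ht.2
    have hu : @inner ℂ _ _ (ζ : Cn n) X = (t:ℂ) * w := by
      rw [hX, ← Complex.coe_smul, inner_smul_right]
    have hre : b.repr X i0 = ((t:ℂ) * w).re := by
      rw [b.repr_apply_apply, hb0]
      show (@inner ℂ _ _ _ _).re = _; rw [hu]
    have him : b.repr X i1 = t * w.im := by
      rw [b.repr_apply_apply, hb1]
      show (@inner ℂ _ _ (Complex.I • (ζ:Cn n)) _).re = _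
      rw [inner_smul_left, hu]; simp
    have hXnorm : ‖X‖ = t := by
      rw [hX, norm_smul, sph_norm, Real.norm_eq_abs, abs_of_pos ht0]; ring
    have hnormu : ‖(t:ℂ) * w‖ ≤ t := by
      rw [norm_mul, Complex.norm_real, Real.norm_eq_abs, abs_of_pos ht0]
      nlinarith [norm_nonneg w]
    rw [Set.mem_preimage, hTmem]
    intro i
    by_cases h0 : i = i0
    · subst h0
      rw [hre, ha0]
      calc |((t:ℂ)*w).re| ≤ ‖(t:ℂ)*w‖ := Complex.abs_re_le_norm _
        _ ≤ t := hnormu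
        _ ≤ 1 := ht1.le
    · by_cases h1 : i = i1
      · subst h1
        rw [him, ha1, abs_mul, abs_of_pos ht0]
        have himw : |w.im| < ε := by
          have h5 : |(1 - w).im| ≤ ‖1 - w‖ := Complex.abs_im_le_norm _
          simp only [Complex.sub_im, Complex.one_im, zero_sub, abs_neg] at h5
          linarith
        nlinarith [abs_nonneg w.im]
      · rw [hai i h0 h1]
        have hsumsq : ∑ j, (b.repr X j)^2 = t^2 := by
          rw [sum_sq_repr, hXnorm]
        have hthree : (b.repr X i0)^2 + (b.repr X i1)^2 + (b.repr X i)^2 ≤ t^2 := by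
          rw [← hsumsq]
          have hcalc : ∑ j ∈ ({i0, i1, i} : Finset (Fin (2*n))), (b.repr X j)^2
              = (b.repr X i0)^2 + (b.repr X i1)^2 + (b.repr X i)^2 := by
            rw [Finset.sum_insert (by simp [hi01, Ne.symm h0, Ne.symm h1]),
              Finset.sum_insert (by simp [Ne.symm h1]), Finset.sum_singleton]
            ring
          rw [← hcalc]
          exact Finset.sum_le_sum_of_subset_of_nonneg (Finset.subset_univ _)
            fun j _ _ => sq_nonneg _
        have hmod : (b.repr X i0)^2 + (b.repr X i1)^2 = t^2 * ‖w‖^2 := by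
          have habs : ‖(t:ℂ)*w‖^2 = ((t:ℂ)*w).re^2 + ((t:ℂ)*w).im^2 := by
            rw [Complex.sq_norm, Complex.normSq_apply]; ring
          have him2 : ((t:ℂ)*w).im = t * w.im := by simp
          rw [hre, him, ← him2, ← habs, norm_mul, Complex.norm_real,
            Real.norm_eq_abs, abs_of_pos ht0]
          ring
        have hsq : (b.repr X i)^2 ≤ 2*ε := by
          have h1' : 1 - ‖w‖ ≤ ‖1 - w‖ := by
            have := norm_sub_norm_le (1:ℂ) w
            simpa using this
          have e1 : b.repr X i ^2 ≤ t^2 - t^2*‖w‖^2 := by linarith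
          have e2 : t^2 - t^2*‖w‖^2 ≤ 1 - ‖w‖^2 := by
            nlinarith [mul_nonneg (by nlinarith : (0:ℝ) ≤ 1 - t^2) (by nlinarith [norm_nonneg w] : (0:ℝ) ≤ 1 - ‖w‖^2)]
          have e3 : 1 - ‖w‖^2 ≤ 2*‖1-w‖ := by nlinarith [norm_nonneg w]
          linarith
        exact Real.abs_le_sqrt hsq
  -- measure computation
  have hvolT : volume (⇑b.repr ⁻¹' T) = ∏ i, ENNReal.ofReal (a i - (-(a i))) := by
    rw [b.measurePreserving_repr.measure_preimage, hT,
      (EuclideanSpace.volume_preserving_symm_measurableEquiv_toLp (Fin (2*n))).measure_preimage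
        (MeasurableSet.univ_pi fun i => measurableSet_Icc).nullMeasurableSet,
      volume_pi_pi]
    · exact Finset.prod_congr rfl fun i _ => Real.volume_Icc
    · exact (MeasurableSet.preimage (MeasurableSet.univ_pi fun i => measurableSet_Icc)
        (MeasurableEquiv.measurable _)).nullMeasurableSet
  have ha_nonneg : ∀ i, 0 ≤ a i := by
    intro i
    by_cases h0 : i = i0
    · rw [h0, ha0]; norm_num
    · by_cases h1 : i = i1
      · rw [h1, ha1]; exact hε.le
      · rw [hai i h0 h1]; positivity
  have hprod : ∏ i, ENNReal.ofReal (a i - (-(a i))) = ENNReal.ofReal (∏ i, (2 * a i)) := by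
    rw [ENNReal.ofReal_prod_of_nonneg (fun i _ => by nlinarith [ha_nonneg i])]
    exact Finset.prod_congr rfl fun i _ => by ring_nf
  have hrest : ∏ j ∈ (Finset.univ.erase i0).erase i1, (2 * a j)
      = (2 * Real.sqrt (2*ε))^(2*n-2) := by
    rw [Finset.prod_congr rfl (g := fun _ => 2 * Real.sqrt (2*ε))
      (fun j hj => by
        rw [Finset.mem_erase, Finset.mem_erase] at hj
        rw [hai j hj.2.1 hj.1]),
      Finset.prod_const, Finset.card_erase_of_mem
        (Finset.mem_erase.2 ⟨Ne.symm hi01, Finset.mem_univ i1⟩),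
      Finset.card_erase_of_mem (Finset.mem_univ i0), Finset.card_univ, Fintype.card_fin,
      Nat.sub_sub]
  have hP : ∏ i, (2 * a i) = (n * 8^n : ℝ) * ε^n / (2*n) := by
    obtain ⟨k, rfl⟩ : ∃ k, n = k + 1 := ⟨n - 1, by omega⟩
    rw [← Finset.mul_prod_erase Finset.univ _ (Finset.mem_univ i0),
      ← Finset.mul_prod_erase _ _
        (Finset.mem_erase.2 ⟨Ne.symm hi01, Finset.mem_univ i1⟩), hrest, ha0, ha1]
    have h2e : (2 * Real.sqrt (2*ε))^(2*(k+1)-2) = (8*ε)^k := by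
      have : 2*(k+1)-2 = 2*k := by omega
      rw [this, pow_mul]
      have : (2 * Real.sqrt (2*ε))^2 = 8*ε := by
        have := Real.sq_sqrt (by positivity : (0:ℝ) ≤ 2*ε)
        nlinarith [this]
      rw [this]
    rw [h2e, mul_pow]
    field_simp
    ring
  show (volume : Measure (Cn n)).toSphere (Icap (ζ : Cn n) ε) ≤ _
  calc (volume : Measure (Cn n)).toSphere (Icap (ζ : Cn n) ε)
      = (Module.finrank ℝ (Cn n) : ℝ≥0∞) *
        volume (Ioo (0:ℝ) 1 • (Subtype.val '' Icap (ζ : Cn n) ε)) :=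
        Measure.toSphere_apply' _ (icap_measurable _ _)
    _ ≤ (Module.finrank ℝ (Cn n) : ℝ≥0∞) * volume (⇑b.repr ⁻¹' T) :=
        mul_le_mul_right (measure_mono hincl) _
    _ = (2*n : ℕ) * ENNReal.ofReal ((n * 8^n : ℝ) * ε^n / (2*n)) := by
        rw [finrank_Cn, hvolT, hprod, hP]
    _ = ENNReal.ofReal ((2*n : ℝ) * ((n * 8^n : ℝ) * ε^n / (2*n))) := by
        rw [← ENNReal.ofReal_natCast (2*n), ← ENNReal.ofReal_mul (by positivity)]
        congr 1
        push_cast; ring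
    _ = ENNReal.ofReal ((n * 8^n : ℝ) * ε^n) := by
        congr 1
        have hn' : (0:ℝ) < 2*n := by positivity
        field_simp
  
end Aux

lemma icap_three (ζ : Sph n) : Icap (ζ : Cn n) 3 = Set.univ := by
  ext η
  simp only [Icap, Set.mem_setOf_eq, Set.mem_univ, iff_true]
  have h : ‖herm (η : Cn n) (ζ : Cn n)‖ ≤ 1 := by
    rw [herm_eq]
    calc ‖@inner ℂ _ _ (ζ:Cn n) (η:Cn n)‖ ≤ ‖(ζ:Cn n)‖ * ‖(η:Cn n)‖ := norm_inner_le_norm _ _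
      _ = 1 := by rw [sph_norm, sph_norm]; ring
  calc ‖(1:ℂ) - herm (η : Cn n) (ζ : Cn n)‖
      ≤ ‖(1:ℂ)‖ + ‖herm (η : Cn n) (ζ : Cn n)‖ := norm_sub_le _ _
    _ ≤ 2 := by rw [norm_one]; linarith
    _ < 3 := by norm_num

lemma sph_nonempty (hn : 1 ≤ n) : Nonempty (Sph n) := by
  have : Fin n := ⟨0, by omega⟩
  refine ⟨⟨EuclideanSpace.single this 1, ?_⟩⟩
  rw [mem_sphere_zero_iff_norm, EuclideanSpace.norm_single, norm_one]

lemma cont_comp {f : Cn n → ℂ} (hf : DifferentiableOn ℂ f (uball n)) {r : ℝ}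
    (hr : r ∈ Set.Ioo (0:ℝ) 1) : Continuous fun η : Sph n => f (r • (η : Cn n)) := by
  apply hf.continuousOn.comp_continuous (continuous_subtype_val.const_smul r : Continuous fun η : Sph n => r • (η : Cn n))
  intro η
  show r • (η : Cn n) ∈ uball n
  rw [uball, mem_ball_zero_iff, norm_smul, sph_norm, mul_one, Real.norm_eq_abs,
    abs_of_pos hr.1]
  exact hr.2

/-- First inequality, per slice. -/
lemma slice1 {f : Cn n → ℂ} (hn : 1 ≤ n) {p s : ℝ} (hp : 0 < p) {r : ℝ}
    (hr : r ∈ Set.Ioo (0:ℝ) 1) :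
    ∫⁻ η : Sph n, ENNReal.ofReal (‖f (r • (η : Cn n))‖ ^ p) ∂(sphMeasure n)
      ≤ ENNReal.ofReal ((3:ℝ) ^ ((n:ℝ) - s*p)) *
        morreyNorm n p s (fun η => f (r • (η : Cn n))) ^ p := by
  obtain ⟨ζ₀⟩ := sph_nonempty (n := n) hn
  have h3 : (0:ℝ) < 3 := by norm_num
  have hle : (ENNReal.ofReal ((3:ℝ) ^ (s*p - (n:ℝ))) *
      ∫⁻ η in Icap (ζ₀ : Cn n) 3, ENNReal.ofReal (‖f (r • (η : Cn n))‖ ^ p)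
        ∂(sphMeasure n)) ^ (1/p)
      ≤ morreyNorm n p s (fun η => f (r • (η : Cn n))) :=
    le_iSup_of_le ζ₀ (le_iSup_of_le 3 (le_iSup_of_le h3 le_rfl))
  rw [icap_three, Measure.restrict_univ] at hle
  have hle2 : ENNReal.ofReal ((3:ℝ) ^ (s*p - (n:ℝ))) *
      (∫⁻ η : Sph n, ENNReal.ofReal (‖f (r • (η : Cn n))‖ ^ p) ∂(sphMeasure n))
      ≤ morreyNorm n p s (fun η => f (r • (η : Cn n))) ^ p := by
    have := ENNReal.rpow_le_rpow hle hp.le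
    rwa [← ENNReal.rpow_mul, one_div_mul_cancel hp.ne', ENNReal.rpow_one] at this
  have hcc : ENNReal.ofReal ((3:ℝ) ^ ((n:ℝ) - s*p)) *
      ENNReal.ofReal ((3:ℝ) ^ (s*p - (n:ℝ))) = 1 := by
    rw [← ENNReal.ofReal_mul (by positivity), ← Real.rpow_add h3]
    norm_num
  calc ∫⁻ η : Sph n, ENNReal.ofReal (‖f (r • (η : Cn n))‖ ^ p) ∂(sphMeasure n)
      = (ENNReal.ofReal ((3:ℝ) ^ ((n:ℝ) - s*p)) * ENNReal.ofReal ((3:ℝ) ^ (s*p - (n:ℝ)))) *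
        ∫⁻ η : Sph n, ENNReal.ofReal (‖f (r • (η : Cn n))‖ ^ p) ∂(sphMeasure n) := by
        rw [hcc, one_mul]
    _ = ENNReal.ofReal ((3:ℝ) ^ ((n:ℝ) - s*p)) * (ENNReal.ofReal ((3:ℝ) ^ (s*p - (n:ℝ))) *
        ∫⁻ η : Sph n, ENNReal.ofReal (‖f (r • (η : Cn n))‖ ^ p) ∂(sphMeasure n)) := by
        rw [mul_assoc]
    _ ≤ _ := mul_le_mul_right hle2 _

/-- Second inequality, per slice. -/
lemma slice2 {f : Cn n → ℂ} (hn : 1 ≤ n) {p s : ℝ} (hp : 1 < p) (hs : 0 < s)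
    (hsn : s ≤ (n:ℝ) / p) (hf : DifferentiableOn ℂ f (uball n)) {r : ℝ}
    (hr : r ∈ Set.Ioo (0:ℝ) 1) :
    morreyNorm n p s (fun η => f (r • (η : Cn n)))
      ≤ ENNReal.ofReal (((n * 8^n : ℝ)) ^ ((1 - s*p/(n:ℝ))/p)) *
        (∫⁻ η : Sph n, ENNReal.ofReal (‖f (r • (η : Cn n))‖ ^ ((n:ℝ)/s)) ∂(sphMeasure n))
          ^ (s/(n:ℝ)) := by
  have hn0 : (0:ℝ) < n := by exact_mod_cast hn
  have hp0 : (0:ℝ) < p := by linarith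
  set q : ℝ := (n:ℝ)/s with hq
  have hq0 : 0 < q := by positivity
  set a : ℝ := s*p/(n:ℝ) with haa
  have ha0 : 0 < a := by positivity
  have ha1 : a ≤ 1 := by
    rw [haa, div_le_one hn0]
    calc s*p ≤ ((n:ℝ)/p)*p := by nlinarith
      _ = n := by field_simp
  have hqa : q * a = p := by rw [hq, haa]; field_simp
  have hap : a / p = s / (n:ℝ) := by rw [haa]; field_simp
  set G : Sph n → ℝ≥0∞ := fun η => ENNReal.ofReal ‖f (r • (η : Cn n))‖ with hG
  have hGm : Measurable G := ((cont_comp hf hr).norm.measurable).ennreal_ofReal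
  have hGp : ∀ η : Sph n, ENNReal.ofReal (‖f (r • (η : Cn n))‖ ^ p) = G η ^ p :=
    fun η => (ENNReal.ofReal_rpow_of_nonneg (norm_nonneg _) hp0.le).symm
  have hGq : ∀ η : Sph n, ENNReal.ofReal (‖f (r • (η : Cn n))‖ ^ q) = G η ^ q :=
    fun η => (ENNReal.ofReal_rpow_of_nonneg (norm_nonneg _) hq0.le).symm
  rw [morreyNorm]
  refine iSup_le fun ζ => iSup_le fun ε => iSup_le fun hε => ?_
  -- Hölder on the cap
  have hhold : ∫⁻ η in Icap (ζ : Cn n) ε, G η ^ p ∂(sphMeasure n)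
      ≤ (∫⁻ η in Icap (ζ : Cn n) ε, G η ^ q ∂(sphMeasure n)) ^ a *
        (sphMeasure n (Icap (ζ : Cn n) ε)) ^ (1 - a) := by
    have h1 := ENNReal.lintegral_mul_norm_pow_le (μ := (sphMeasure n).restrict (Icap (ζ:Cn n) ε))
      (f := fun η => G η ^ q) (g := fun _ => (1:ℝ≥0∞)) (p := a) (q := 1 - a)
      ((hGm.pow_const q).aemeasurable) aemeasurable_const ha0.le (by linarith)
      (by ring)
    simp only [ENNReal.one_rpow, mul_one, lintegral_one, Measure.restrict_apply_univ] at h1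
    calc ∫⁻ η in Icap (ζ : Cn n) ε, G η ^ p ∂(sphMeasure n)
        = ∫⁻ η in Icap (ζ : Cn n) ε, (G η ^ q) ^ a ∂(sphMeasure n) := by
          refine lintegral_congr fun η => ?_
          rw [← ENNReal.rpow_mul, hqa]
      _ ≤ _ := h1
  have hcap := cap_bound hn ζ hε
  have hcapr : (sphMeasure n (Icap (ζ : Cn n) ε)) ^ (1-a)
      ≤ ENNReal.ofReal (((n * 8^n : ℝ) * ε^n) ^ (1-a)) := by
    rw [← ENNReal.ofReal_rpow_of_pos (by positivity)]
    exact ENNReal.rpow_le_rpow hcap (by linarith)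
  have htail : ∫⁻ η in Icap (ζ : Cn n) ε, G η ^ q ∂(sphMeasure n)
      ≤ ∫⁻ η : Sph n, G η ^ q ∂(sphMeasure n) := setLIntegral_le_lintegral _ _
  -- the epsilon powers cancel
  have hcancel : ENNReal.ofReal (ε ^ (s*p - (n:ℝ))) *
      ENNReal.ofReal (((n * 8^n : ℝ) * ε^n) ^ (1-a))
      = ENNReal.ofReal (((n * 8^n : ℝ)) ^ (1-a)) := by
    rw [← ENNReal.ofReal_mul (by positivity)]
    congr 1
    rw [Real.mul_rpow (by positivity) (by positivity), ← Real.rpow_natCast ε n,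
      ← Real.rpow_mul hε.le]
    have : ε ^ (s*p - (n:ℝ)) * (((n * 8^n : ℝ)) ^ (1-a) * ε ^ ((n:ℝ) * (1-a)))
        = ((n * 8^n : ℝ)) ^ (1-a) * (ε ^ (s*p - (n:ℝ)) * ε ^ ((n:ℝ) * (1-a))) := by ring
    rw [this, ← Real.rpow_add hε]
    have hexp : s*p - (n:ℝ) + (n:ℝ) * (1-a) = 0 := by
      rw [haa]; field_simp; ring
    rw [hexp, Real.rpow_zero, mul_one]
  -- put everything together
  have hmain : ENNReal.ofReal (ε ^ (s*p - (n:ℝ))) *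
      ∫⁻ η in Icap (ζ : Cn n) ε, ENNReal.ofReal (‖f (r • (η : Cn n))‖ ^ p) ∂(sphMeasure n)
      ≤ ENNReal.ofReal (((n * 8^n : ℝ)) ^ (1-a)) *
        (∫⁻ η : Sph n, G η ^ q ∂(sphMeasure n)) ^ a := by
    calc ENNReal.ofReal (ε ^ (s*p - (n:ℝ))) *
        ∫⁻ η in Icap (ζ : Cn n) ε, ENNReal.ofReal (‖f (r • (η : Cn n))‖ ^ p) ∂(sphMeasure n)
        = ENNReal.ofReal (ε ^ (s*p - (n:ℝ))) *
          ∫⁻ η in Icap (ζ : Cn n) ε, G η ^ p ∂(sphMeasure n) := by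
          congr 1; exact lintegral_congr fun η => by rw [hGp]
      _ ≤ ENNReal.ofReal (ε ^ (s*p - (n:ℝ))) *
          ((∫⁻ η : Sph n, G η ^ q ∂(sphMeasure n)) ^ a *
            ENNReal.ofReal (((n * 8^n : ℝ) * ε^n) ^ (1-a))) := by
          refine mul_le_mul_right (hhold.trans ?_) _
          exact mul_le_mul' (ENNReal.rpow_le_rpow htail ha0.le) hcapr
      _ = (ENNReal.ofReal (ε ^ (s*p - (n:ℝ))) *
            ENNReal.ofReal (((n * 8^n : ℝ) * ε^n) ^ (1-a))) *
          (∫⁻ η : Sph n, G η ^ q ∂(sphMeasure n)) ^ a := by ring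
      _ = _ := by rw [hcancel]
  calc (ENNReal.ofReal (ε ^ (s*p - (n:ℝ))) *
      ∫⁻ η in Icap (ζ : Cn n) ε, ENNReal.ofReal (‖f (r • (η : Cn n))‖ ^ p)
        ∂(sphMeasure n)) ^ (1/p)
      ≤ (ENNReal.ofReal (((n * 8^n : ℝ)) ^ (1-a)) *
          (∫⁻ η : Sph n, G η ^ q ∂(sphMeasure n)) ^ a) ^ (1/p) :=
        ENNReal.rpow_le_rpow hmain (by positivity)
    _ = ENNReal.ofReal (((n * 8^n : ℝ)) ^ ((1-a)/p)) *
        (∫⁻ η : Sph n, ENNReal.ofReal (‖f (r • (η : Cn n))‖ ^ q) ∂(sphMeasure n))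
          ^ (s/(n:ℝ)) := by
        rw [ENNReal.mul_rpow_of_nonneg _ _ (by positivity : (0:ℝ) ≤ 1/p),
          ← ENNReal.rpow_mul, ENNReal.ofReal_rpow_of_pos (by positivity),
          ← Real.rpow_mul (by positivity : (0:ℝ) ≤ (n * 8^n : ℝ)), mul_one_div,
          mul_one_div, hap]
        congr 2
        exact lintegral_congr fun η => (hGq η).symm

/-- Embeddings between Hardy and Morrey spaces (Proposition 2.7):
`H^{n/s} ⊆ HM^{p,s} ⊆ H^p`, with norm estimates. -/
theorem morrey_hardy_embedding (n : ℕ) (hn : 1 ≤ n)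
    (p s : ℝ) (hp : 1 < p) (hs : 0 < s) (hsn : s ≤ n / p) :
    ∃ C : ℝ, 0 < C ∧ ∀ f : Cn n → ℂ, DifferentiableOn ℂ f (uball n) →
      hardyNormU p f ≤ ENNReal.ofReal C * hmNorm p s f ∧
      hmNorm p s f ≤ ENNReal.ofReal C * hardyNormU ((n : ℝ) / s) f ∧
      (hardyNormU ((n : ℝ) / s) f < ⊤ → MemHM p s f) ∧
      (MemHM p s f → hardyNormU p f < ⊤) := by
  have hn0 : (0:ℝ) < n := by exact_mod_cast hn
  have hp0 : (0:ℝ) < p := lt_trans one_pos hp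
  set C1 : ℝ := ((3:ℝ) ^ ((n:ℝ) - s*p)) ^ (1/p) with hC1def
  set C2 : ℝ := ((n * 8^n : ℝ)) ^ ((1 - s*p/(n:ℝ))/p) with hC2def
  have hC1 : 0 < C1 := by positivity
  have hC2 : 0 < C2 := by positivity
  refine ⟨max C1 C2, lt_max_of_lt_left hC1, fun f hf => ?_⟩
  have key1 : hardyNormU p f ≤ ENNReal.ofReal C1 * hmNorm p s f := by
    have h : ∀ r ∈ Set.Ioo (0:ℝ) 1,
        (∫⁻ η : Sph n, ENNReal.ofReal (‖f (r • (η : Cn n))‖ ^ p) ∂(sphMeasure n))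
          ≤ ENNReal.ofReal ((3:ℝ) ^ ((n:ℝ) - s*p)) * hmNorm p s f ^ p := by
      intro r hr
      refine (slice1 (s := s) hn hp0 hr).trans (mul_le_mul_right ?_ _)
      refine ENNReal.rpow_le_rpow ?_ hp0.le
      exact le_biSup (fun r => morreyNorm n p s fun ζ => f (r • (ζ : Cn n))) hr
    have h2 : hardyNormU p f ≤
        (ENNReal.ofReal ((3:ℝ) ^ ((n:ℝ) - s*p)) * hmNorm p s f ^ p) ^ (1/p) := by
      rw [hardyNormU]
      exact ENNReal.rpow_le_rpow (iSup₂_le h) (by positivity)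
    refine h2.trans (le_of_eq ?_)
    rw [ENNReal.mul_rpow_of_nonneg _ _ (by positivity : (0:ℝ) ≤ 1/p),
      ← ENNReal.rpow_mul, mul_one_div, div_self hp0.ne', ENNReal.rpow_one,
      ENNReal.ofReal_rpow_of_pos (by positivity)]
  have key2 : hmNorm p s f ≤ ENNReal.ofReal C2 * hardyNormU ((n:ℝ)/s) f := by
    have hns : 1 / ((n:ℝ)/s) = s / (n:ℝ) := one_div_div _ _
    rw [hmNorm, hardyNormU, hns]
    refine iSup₂_le fun r hr => ?_
    refine (slice2 hn hp hs hsn hf hr).trans (mul_le_mul_right ?_ _)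
    refine ENNReal.rpow_le_rpow ?_ (by positivity)
    exact le_biSup (fun r => ∫⁻ η : Sph n, ENNReal.ofReal (‖f (r • (η : Cn n))‖ ^ ((n:ℝ)/s)) ∂(sphMeasure n)) hr
  have key1' : hardyNormU p f ≤ ENNReal.ofReal (max C1 C2) * hmNorm p s f :=
    key1.trans (mul_le_mul_left (ENNReal.ofReal_le_ofReal (le_max_left _ _)) _)
  have key2' : hmNorm p s f ≤ ENNReal.ofReal (max C1 C2) * hardyNormU ((n:ℝ)/s) f :=
    key2.trans (mul_le_mul_left (ENNReal.ofReal_le_ofReal (le_max_right _ _)) _)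
  refine ⟨key1', key2', fun h => ⟨hf, ?_⟩, fun h => ?_⟩
  · exact lt_of_le_of_lt key2' (ENNReal.mul_lt_top ENNReal.ofReal_lt_top h)
  · exact lt_of_le_of_lt key1' (ENNReal.mul_lt_top ENNReal.ofReal_lt_top h.2)
end
end
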